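/- Let C be a TDD respecting a vtree T over a finite variable set X, let t be a node of T and g a t-node of C, and let τ1, τ2 ∈ 2^{X_t} be two models of f_g. Then f_C[τ1] = f_C[τ2] as Boolean functions over X∖X_t; call this common X_t-subfunction sub_g. Moreover, for every model τ of f_C whose (unique) certificate contains g, the restriction of τ to X∖X_t is a model of sub_g. -/
import Mathlib


/-- A vtree: a rooted binary tree whose leaves are labeled by variables. -/
inductive Vtree (V : Type) where
  | leaf : V → Vtree V
  | node : Vtree V → Vtree V → Vtree V

namespace Vtree

variable {V : Type} [DecidableEq V]

/-- The set of variables labeling the leaves of a vtree. -/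
def vars : Vtree V → Finset V
  | leaf x => {x}
  | node l r => l.vars ∪ r.vars

/-- A vtree is proper when its leaves carry pairwise distinct variables,
so that the leaves are in one-to-one correspondence with `vars`. -/
def Proper : Vtree V → Prop
  | leaf _ => True
  | node l r => l.Proper ∧ r.Proper ∧ Disjoint l.vars r.vars

/-- `T.IsNode t` : `t` is (the subtree rooted at) a node of `T`. -/
def IsNode : Vtree V → Vtree V → Prop
  | leaf x, t => t = leaf x
  | node l r, t => t = node l r ∨ l.IsNode t ∨ r.IsNode t

/-- Remove every leaf whose variable is in `Y`, suppressing unary nodes.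
Returns `none` if no leaf survives. -/
def restrict (Y : Finset V) : Vtree V → Option (Vtree V)
  | leaf x => if x ∈ Y then none else some (leaf x)
  | node l r =>
    match l.restrict Y, r.restrict Y with
    | none, o => o
    | some l', none => some l'
    | some l', some r' => some (node l' r')

/-- The vtree `T ∖ x`. -/
def remove (x : V) (T : Vtree V) : Option (Vtree V) := T.restrict {x}

/-- A vtree is linear when every internal node has a leaf child. -/
def Linear : Vtree V → Prop
  | leaf _ => True
  | node l r => ((∃ x, l = leaf x) ∨ (∃ x, r = leaf x)) ∧ l.Linear ∧ r.Linear

/-- The variable order induced by a linear vtree. -/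
def order : Vtree V → List V
  | leaf x => [x]
  | node (leaf x) r => x :: r.order
  | node l (leaf x) => x :: l.order
  | node l r => l.order ++ r.order

end Vtree

/-- Labels of leaf-layer nodes of a TDD: the positive literal, the negative
literal, and the constants 1 and 0. -/
inductive TLab where
  | pos | neg | one | zero
deriving DecidableEq

/-- Disjunction of two leaf labels (used when contracting twin leaf nodes). -/
def TLab.lor : TLab → TLab → TLab
  | .zero, a => a
  | a, .zero => a
  | .one, _ => .one
  | _, .one => .one
  | .pos, .pos => .pos
  | .neg, .neg => .neg
  | .pos, .neg => .one
  | .neg, .pos => .one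

/-- A (non-deterministic) tree decision diagram structured along a vtree:
one layer of nodes (identified by natural numbers) per vtree node; leaf-layer
nodes carry labels, internal-layer nodes carry their sets of input pairs. -/
inductive NTDD (V : Type) where
  | leaf (x : V) (ns : Finset ℕ) (lab : ℕ → TLab)
  | node (l r : NTDD V) (ns : Finset ℕ) (E : ℕ → Finset (ℕ × ℕ))

namespace NTDD

variable {V : Type}

/-- The vtree that an nTDD is structured along. -/
def shape : NTDD V → Vtree V
  | leaf x _ _ => .leaf x
  | node l r _ _ => .node l.shape r.shape

/-- The set of nodes of the top (root) layer. -/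
def nodes : NTDD V → Finset ℕ
  | leaf _ ns _ => ns
  | node _ _ ns _ => ns

/-- The size of an nTDD: the total number of input pairs. -/
def size : NTDD V → ℕ
  | leaf _ _ _ => 0
  | node l r ns E => l.size + r.size + ∑ g ∈ ns, (E g).card

/-- The width of an nTDD: the maximal cardinality of a layer. -/
def width : NTDD V → ℕ
  | leaf _ ns _ => ns.card
  | node l r ns _ => max ns.card (max l.width r.width)

/-- `C.sat g τ` : (the restriction of) the assignment `τ` is a model of the
function `f_g` computed by the top-layer node `g` of `C`. -/
def sat : NTDD V → ℕ → (V → Bool) → Prop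
  | leaf x _ lab, g, τ =>
    match lab g with
    | .pos => τ x = true
    | .neg => τ x = false
    | .one => True
    | .zero => False
  | node l r _ E, g, τ => ∃ p ∈ E g, l.sat p.1 τ ∧ r.sat p.2 τ

/-- Well-formedness: input pairs of top-layer nodes reference nodes of the
children layers. -/
def WF : NTDD V → Prop
  | leaf _ _ _ => True
  | node l r ns E => l.WF ∧ r.WF ∧ ∀ g ∈ ns, ∀ p ∈ E g, p.1 ∈ l.nodes ∧ p.2 ∈ r.nodes

/-- Determinism, turning an nTDD into a TDD: at each leaf layer at most one
node labeled by each of `x`, `¬x`, `1`, and if a node is labeled `1` then all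
other nodes are labeled `0`; at each internal layer every pair is the input of
at most one node. -/
def Det : NTDD V → Prop
  | leaf _ ns lab =>
      (∀ g ∈ ns, ∀ g' ∈ ns, lab g = TLab.pos → lab g' = TLab.pos → g = g') ∧
      (∀ g ∈ ns, ∀ g' ∈ ns, lab g = TLab.neg → lab g' = TLab.neg → g = g') ∧
      (∀ g ∈ ns, ∀ g' ∈ ns, lab g = TLab.one → lab g' = TLab.one → g = g') ∧
      (∀ g ∈ ns, lab g = TLab.one → ∀ g' ∈ ns, g' ≠ g → lab g' = TLab.zero)
  | node l r ns E => l.Det ∧ r.Det ∧ ∀ g ∈ ns, ∀ g' ∈ ns, g ≠ g' → Disjoint (E g) (E g')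

/-- `C.Subdiagram D` : `D` is the sub-diagram of `C` sitting at some node of
the underlying vtree (including `C` itself). -/
def Subdiagram : NTDD V → NTDD V → Prop
  | leaf x ns lab, D => D = leaf x ns lab
  | node l r ns E, D => D = node l r ns E ∨ l.Subdiagram D ∨ r.Subdiagram D

/-- A TDD is full if, at every layer, every assignment is a model of some node
of that layer. -/
def Full (C : NTDD V) : Prop :=
  ∀ D : NTDD V, C.Subdiagram D → ∀ τ : V → Bool, ∃ g ∈ D.nodes, D.sat g τ

end NTDD

/-- A choice of one node id per vtree node, mirroring the vtree: the data of a
certificate. -/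
inductive IdTree where
  | leaf (g : ℕ)
  | node (g : ℕ) (l r : IdTree)

/-- The id chosen at the root. -/
def IdTree.root : IdTree → ℕ
  | .leaf g => g
  | .node g _ _ => g

namespace NTDD

variable {V : Type}

/-- `C.IsCert P τ` : the choice `P` of one node per layer is a certificate for
`τ` in `C` (except for the root condition `P.root = out`, stated separately):
at a leaf labeled `x` the chosen node is labeled `1` or by a literal satisfied
by `τ`, and at an internal node the chosen pair of children nodes is an input
of the chosen node. -/
def IsCert : NTDD V → IdTree → (V → Bool) → Prop
  | leaf x ns lab, IdTree.leaf g, τ =>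
      g ∈ ns ∧ (lab g = TLab.one ∨ (lab g = TLab.pos ∧ τ x = true) ∨
        (lab g = TLab.neg ∧ τ x = false))
  | node l r ns E, IdTree.node g pl pr, τ =>
      g ∈ ns ∧ (pl.root, pr.root) ∈ E g ∧ l.IsCert pl τ ∧ r.IsCert pr τ
  | _, _, _ => False

/-- `SubPair C P D Q` : `D` is the sub-diagram of `C` at some vtree node `t`,
and `Q` is the corresponding part of the certificate data `P` (so `Q.root` is
the node that `P` chooses at `t`). -/
def SubPair : NTDD V → IdTree → NTDD V → IdTree → Prop
  | leaf x ns lab, P, D, Q => D = leaf x ns lab ∧ Q = P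
  | node l r ns E, P, D, Q =>
      (D = node l r ns E ∧ Q = P) ∨
      (match P with
       | IdTree.node _ pl pr => l.SubPair pl D Q ∨ r.SubPair pr D Q
       | _ => False)

/-- Contract the two top-layer nodes `g1, g1'` into the fresh node `v`. -/
def contractLayer (g1 g1' v : ℕ) : NTDD V → NTDD V
  | leaf x ns lab =>
      leaf x (insert v ((ns.erase g1).erase g1'))
        (fun g => if g = v then (lab g1).lor (lab g1') else lab g)
  | node l r ns E =>
      node l r (insert v ((ns.erase g1).erase g1'))
        (fun g => if g = v then E g1 ∪ E g1' else E g)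

/-- Twin contraction of nodes `g1, g1'` of the left child layer into `v`:
they are merged in the left layer, and every input pair `(g1, g2)` or
`(g1', g2)` of a top-layer node is replaced by `(v, g2)`. -/
def contractAtL (g1 g1' v : ℕ) : NTDD V → NTDD V
  | node l r ns E =>
      node (l.contractLayer g1 g1' v) r ns
        (fun g => (E g).image (fun p => if p.1 = g1 ∨ p.1 = g1' then (v, p.2) else p))
  | C => C

/-- Twin contraction of nodes `g1, g1'` of the right child layer into `v`. -/
def contractAtR (g1 g1' v : ℕ) : NTDD V → NTDD V
  | node l r ns E =>
      node l (r.contractLayer g1 g1' v) ns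
        (fun g => (E g).image (fun p => if p.2 = g1 ∨ p.2 = g1' then (p.1, v) else p))
  | C => C

open Classical in
/-- Replace the sub-diagram `D` of `C` by `D'` (in a proper vtree, sub-diagrams
at distinct positions are distinct, so this is unambiguous). -/
noncomputable def replace : NTDD V → NTDD V → NTDD V → NTDD V
  | leaf x ns lab, D, D' => if leaf x ns lab = D then D' else leaf x ns lab
  | node l r ns E, D, D' =>
      if node l r ns E = D then D'
      else node (l.replace D D') (r.replace D D') ns E

/-- `g1` and `g1'` are twins of the left child layer: they have the same
siblings with respect to every top-layer node. -/
def TwinsL (g1 g1' : ℕ) : NTDD V → Prop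
  | node l _ ns E => g1 ∈ l.nodes ∧ g1' ∈ l.nodes ∧ g1 ≠ g1' ∧
      ∀ g ∈ ns, ∀ g2 : ℕ, ((g1, g2) ∈ E g ↔ (g1', g2) ∈ E g)
  | _ => False

/-- `g1` and `g1'` are twins of the right child layer. -/
def TwinsR (g1 g1' : ℕ) : NTDD V → Prop
  | node _ r ns E => g1 ∈ r.nodes ∧ g1' ∈ r.nodes ∧ g1 ≠ g1' ∧
      ∀ g ∈ ns, ∀ g2 : ℕ, ((g2, g1) ∈ E g ↔ (g2, g1') ∈ E g)
  | _ => False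

/-- The node set of the left child layer. -/
def leftNodes : NTDD V → Finset ℕ
  | node l _ _ _ => l.nodes
  | _ => ∅

/-- The node set of the right child layer. -/
def rightNodes : NTDD V → Finset ℕ
  | node _ r _ _ => r.nodes
  | _ => ∅

end NTDD

/-- The number of distinct non-trivial `Y`-subfunctions of the Boolean
function `f` : functions of the form `σ ↦ f (Y.piecewise τ σ)` for some
`τ`, having at least one model. -/
noncomputable def subCount {V : Type} [DecidableEq V] (f : (V → Bool) → Prop) (Y : Finset V) : ℕ :=
  Nat.card {h : (V → Bool) → Prop |
    (∃ τ : V → Bool, h = fun σ => f (Y.piecewise τ σ)) ∧ ∃ σ : V → Bool, h σ}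

/-- The number of distinct `Y`-subfunctions of `f` (trivial ones included). -/
noncomputable def subCountAll {V : Type} [DecidableEq V] (f : (V → Bool) → Prop) (Y : Finset V) : ℕ :=
  Nat.card {h : (V → Bool) → Prop |
    ∃ τ : V → Bool, h = fun σ => f (Y.piecewise τ σ)}

set_option linter.unusedSectionVars false
set_option linter.unusedVariables false

namespace NTDD

variable {V : Type} [DecidableEq V]

lemma sat_congr (C : NTDD V) (g : ℕ) (τ τ' : V → Bool)
    (h : ∀ x ∈ C.shape.vars, τ x = τ' x) : C.sat g τ ↔ C.sat g τ' := by
  induction C generalizing g with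
  | leaf x ns lab =>
    have hx : τ x = τ' x := h x (by simp [shape, Vtree.vars])
    cases hl : lab g <;> simp [sat, hl, hx]
  | node l r ns E ihl ihr =>
    simp only [sat]
    constructor <;> rintro ⟨p, hp, hl1, hr1⟩ <;> refine ⟨p, hp, ?_, ?_⟩
    · exact (ihl p.1 (fun y hy => h y (by simp [shape, Vtree.vars]; exact Or.inl hy))).1 hl1
    · exact (ihr p.2 (fun y hy => h y (by simp [shape, Vtree.vars]; exact Or.inr hy))).1 hr1
    · exact (ihl p.1 (fun y hy => h y (by simp [shape, Vtree.vars]; exact Or.inl hy))).2 hl1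
    · exact (ihr p.2 (fun y hy => h y (by simp [shape, Vtree.vars]; exact Or.inr hy))).2 hr1

lemma sat_unique (C : NTDD V) (hWF : C.WF) (hDet : C.Det) (τ : V → Bool) :
    ∀ g ∈ C.nodes, ∀ g' ∈ C.nodes, C.sat g τ → C.sat g' τ → g = g' := by
  induction C with
  | leaf x ns lab =>
    intro g hg g' hg' hs hs'
    obtain ⟨d1, d2, d3, d4⟩ := hDet
    cases hlg : lab g <;> cases hlg' : lab g' <;>
      simp only [sat, hlg, hlg'] at hs hs'
    all_goals first
      | exact d1 g hg g' hg' hlg hlg'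
      | exact d2 g hg g' hg' hlg hlg'
      | exact d3 g hg g' hg' hlg hlg'
      | (rw [hs] at hs'; simp at hs')
      | (by_contra hne
         have := d4 g hg hlg g' hg' (fun h => hne h.symm)
         rw [this] at hlg'; simp at hlg')
      | (by_contra hne
         have := d4 g' hg' hlg' g hg hne
         rw [this] at hlg; simp at hlg)
  | node l r ns E ihl ihr =>
    intro g hg g' hg' hs hs'
    obtain ⟨wl, wr, wE⟩ := hWF
    obtain ⟨dl, dr, dE⟩ := hDet
    obtain ⟨p, hp, hp1, hp2⟩ := hs
    obtain ⟨p', hp', hp1', hp2'⟩ := hs'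
    by_contra hne
    have m1 := wE g hg p hp
    have m2 := wE g' hg' p' hp'
    have e1 : p.1 = p'.1 := ihl wl dl p.1 m1.1 p'.1 m2.1 hp1 hp1'
    have e2 : p.2 = p'.2 := ihr wr dr p.2 m1.2 p'.2 m2.2 hp2 hp2'
    have hpp : p = p' := Prod.ext e1 e2
    exact Finset.disjoint_left.mp (dE g hg g' hg' hne) hp (hpp ▸ hp')

lemma main_self (C : NTDD V) (hWF : C.WF) (hDet : C.Det)
    (g : ℕ) (hg : g ∈ C.nodes) (τ1 τ2 : V → Bool) (h1 : C.sat g τ1) (h2 : C.sat g τ2)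
    (out : ℕ) (hout : out ∈ C.nodes) (σ : V → Bool)
    (hs : C.sat out (C.shape.vars.piecewise τ1 σ)) :
    C.sat out (C.shape.vars.piecewise τ2 σ) := by
  have hs1 : C.sat out τ1 :=
    (sat_congr C out _ _ (fun y hy => Finset.piecewise_eq_of_mem _ _ _ hy)).1 hs
  have heq : out = g := sat_unique C hWF hDet τ1 out hout g hg hs1 h1
  subst heq
  exact (sat_congr C out _ _ (fun y hy => Finset.piecewise_eq_of_mem _ _ _ hy)).2 h2

lemma sub_vars (C D : NTDD V) (h : C.Subdiagram D) : D.shape.vars ⊆ C.shape.vars := by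
  induction C with
  | leaf x ns lab => rw [Subdiagram] at h; subst h; exact Finset.Subset.refl _
  | node l r ns E ihl ihr =>
    rcases h with h | h | h
    · subst h; exact Finset.Subset.refl _
    · exact (ihl h).trans
        (by simp only [shape, Vtree.vars]; exact Finset.subset_union_left)
    · exact (ihr h).trans
        (by simp only [shape, Vtree.vars]; exact Finset.subset_union_right)

lemma main_lemma (C : NTDD V) (hP : C.shape.Proper) (hWF : C.WF) (hDet : C.Det)
    (D : NTDD V) (hD : C.Subdiagram D) (g : ℕ) (hg : g ∈ D.nodes)
    (τ1 τ2 : V → Bool) (h1 : D.sat g τ1) (h2 : D.sat g τ2) :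
    ∀ out ∈ C.nodes, ∀ σ : V → Bool,
      C.sat out (D.shape.vars.piecewise τ1 σ) → C.sat out (D.shape.vars.piecewise τ2 σ) := by
  induction C with
  | leaf x ns lab =>
    rw [Subdiagram] at hD; subst hD
    intro out hout σ hs
    exact main_self _ hWF hDet g hg τ1 τ2 h1 h2 out hout σ hs
  | node l r ns E ihl ihr =>
    obtain ⟨pl, pr, pd⟩ := hP
    obtain ⟨wl, wr, wE⟩ := hWF
    obtain ⟨dl, dr, dE⟩ := hDet
    rcases hD with hD | hD | hD
    · subst hD
      intro out hout σ hs
      exact main_self (node l r ns E) ⟨wl, wr, wE⟩ ⟨dl, dr, dE⟩ g hg τ1 τ2 h1 h2 out hout σ hs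
    · intro out hout σ hs
      obtain ⟨p, hp, hp1, hp2⟩ := hs
      have hmem := wE out hout p hp
      have hsub : D.shape.vars ⊆ l.shape.vars := sub_vars l D hD
      have hagree : ∀ y ∈ r.shape.vars,
          (D.shape.vars.piecewise τ1 σ) y = (D.shape.vars.piecewise τ2 σ) y := by
        intro y hy
        have hnot : y ∉ D.shape.vars := fun hc =>
          Finset.disjoint_left.mp pd (hsub hc) hy
        simp [Finset.piecewise_eq_of_notMem _ _ _ hnot]
      exact ⟨p, hp, ihl pl wl dl hD p.1 hmem.1 σ hp1,
        (sat_congr r p.2 _ _ hagree).1 hp2⟩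
    · intro out hout σ hs
      obtain ⟨p, hp, hp1, hp2⟩ := hs
      have hmem := wE out hout p hp
      have hsub : D.shape.vars ⊆ r.shape.vars := sub_vars r D hD
      have hagree : ∀ y ∈ l.shape.vars,
          (D.shape.vars.piecewise τ1 σ) y = (D.shape.vars.piecewise τ2 σ) y := by
        intro y hy
        have hnot : y ∉ D.shape.vars := fun hc =>
          Finset.disjoint_right.mp pd (hsub hc) hy
        simp [Finset.piecewise_eq_of_notMem _ _ _ hnot]
      exact ⟨p, hp, (sat_congr l p.1 _ _ hagree).1 hp1,
        ihr pr wr dr hD p.2 hmem.2 σ hp2⟩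

lemma cert_sat (C : NTDD V) (P : IdTree) (τ : V → Bool) (h : C.IsCert P τ) :
    C.sat P.root τ := by
  induction C generalizing P with
  | leaf x ns lab =>
    cases P with
    | leaf g =>
      obtain ⟨hg, h⟩ := h
      rcases h with h | ⟨h, hx⟩ | ⟨h, hx⟩
      · simp [sat, IdTree.root, h]
      · simp [sat, IdTree.root, h, hx]
      · simp [sat, IdTree.root, h, hx]
    | node g pL pR => exact h.elim
  | node l r ns E ihl ihr =>
    cases P with
    | leaf g => exact h.elim
    | node g pL pR =>
      obtain ⟨hg, hE, hl, hr⟩ := h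
      exact ⟨(pL.root, pR.root), hE, ihl pL hl, ihr pR hr⟩

lemma subpair_cert (C : NTDD V) (P : IdTree) (D : NTDD V) (Q : IdTree) (τ : V → Bool)
    (hc : C.IsCert P τ) (hsp : C.SubPair P D Q) : D.IsCert Q τ := by
  induction C generalizing P with
  | leaf x ns lab =>
    obtain ⟨hD, hQ⟩ := hsp
    subst hD; subst hQ; exact hc
  | node l r ns E ihl ihr =>
    rcases hsp with ⟨hD, hQ⟩ | hsp
    · subst hD; subst hQ; exact hc
    · cases P with
      | leaf g => exact hsp.elim
      | node g pL pR =>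
        obtain ⟨hg, hE, hl, hr⟩ := hc
        rcases hsp with h | h
        · exact ihl pL hl h
        · exact ihr pR hr h

end NTDD


/-- Let `C` be a TDD respecting a vtree `T` over `X`, let
`g` be a `t`-node of `C` (with `D` the sub-diagram of `C` at `t`), and let
`τ1, τ2` be two models of `f_g`. Then `f_C[τ1] = f_C[τ2]` as Boolean
functions over `X ∖ X_t` (this common subfunction is `sub_g`); moreover, for
every model `τ` of `f_C` whose certificate chooses `g` at `t`, the
restriction of `τ` to `X ∖ X_t` is a model of `sub_g`. -/
theorem stmt9 {V : Type} [DecidableEq V] (X : Finset V) (T : Vtree V)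
    (hTp : T.Proper) (hTX : T.vars = X)
    (C : NTDD V) (out : ℕ) (hsh : C.shape = T) (hWF : C.WF) (hDet : C.Det)
    (hout : out ∈ C.nodes)
    (D : NTDD V) (hD : C.Subdiagram D) (g : ℕ) (hg : g ∈ D.nodes)
    (τ1 τ2 : V → Bool) (h1 : D.sat g τ1) (h2 : D.sat g τ2) :
    (∀ σ : V → Bool,
      (C.sat out ((D.shape.vars).piecewise τ1 σ) ↔
        C.sat out ((D.shape.vars).piecewise τ2 σ))) ∧
    (∀ (τ : V → Bool) (P Q : IdTree),
      P.root = out → C.IsCert P τ → C.SubPair P D Q → Q.root = g →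
      C.sat out ((D.shape.vars).piecewise τ1 τ)) := by
  have hP : C.shape.Proper := by rw [hsh]; exact hTp
  have part1 : ∀ σ : V → Bool,
      (C.sat out ((D.shape.vars).piecewise τ1 σ) ↔
        C.sat out ((D.shape.vars).piecewise τ2 σ)) := fun σ =>
    ⟨NTDD.main_lemma C hP hWF hDet D hD g hg τ1 τ2 h1 h2 out hout σ,
     NTDD.main_lemma C hP hWF hDet D hD g hg τ2 τ1 h2 h1 out hout σ⟩
  refine ⟨part1, ?_⟩
  intro τ P Q hroot hcert hsp hQ
  have hdc : D.IsCert Q τ := NTDD.subpair_cert C P D Q τ hcert hsp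
  have hdsat : D.sat g τ := by
    have := NTDD.cert_sat D Q τ hdc
    rwa [hQ] at this
  have hsat : C.sat out τ := by
    have := NTDD.cert_sat C P τ hcert
    rwa [hroot] at this
  have hsat' : C.sat out (D.shape.vars.piecewise τ τ) := by
    have heq : D.shape.vars.piecewise τ τ = τ := by
      funext y; by_cases hy : y ∈ D.shape.vars <;> simp [Finset.piecewise, hy]
    rwa [heq]
  exact NTDD.main_lemma C hP hWF hDet D hD g hg τ τ1 hdsat h1 out hout τ hsat'
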